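/- Let P be a probability measure supported on [a,b] with 0 < a ≤ b < ∞ and φ ∈ (0,1]. Then μ = 0 is the unique solution in [0,∞) of the equation μ = φ ∫ μ·r/(μ+r) dP(r); whereas if φ > 1, there exists a unique μ > 0 solving this equation. -/

import Mathlib

open MeasureTheory

lemma rr_integrable (a b μ : ℝ) (ha : 0 < a) (P : Measure ℝ) [IsProbabilityMeasure P]
    (hsupp : ∀ᵐ r ∂P, r ∈ Set.Icc a b) (hμ : 0 ≤ μ) :
    Integrable (fun r => r / (μ + r)) P := by
  apply Integrable.mono' (integrable_const (1:ℝ))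
  · exact (measurable_id.div (measurable_const.add measurable_id)).aestronglyMeasurable
  · filter_upwards [hsupp] with r hr
    have hr0 : 0 < r := lt_of_lt_of_le ha hr.1
    have hd : 0 < μ + r := by linarith
    rw [Real.norm_eq_abs, abs_of_nonneg (by positivity), div_le_one hd]
    linarith

lemma rr_integral_le (a b μ : ℝ) (ha : 0 < a) (P : Measure ℝ) [IsProbabilityMeasure P]
    (hsupp : ∀ᵐ r ∂P, r ∈ Set.Icc a b) (hμ : 0 ≤ μ) :
    ∫ r, r / (μ + r) ∂P ≤ b / (μ + a) := by
  have h := integral_mono_ae (rr_integrable a b μ ha P hsupp hμ)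
    (integrable_const (b / (μ + a))) ?_
  · simpa using h
  · filter_upwards [hsupp] with r hr
    exact div_le_div₀ (le_trans ha.le (hr.1.trans hr.2)) hr.2 (by linarith) (by linarith [hr.1])

lemma rr_integral_le' (a b μ : ℝ) (ha : 0 < a) (P : Measure ℝ) [IsProbabilityMeasure P]
    (hsupp : ∀ᵐ r ∂P, r ∈ Set.Icc a b) (hμ : 0 ≤ μ) :
    ∫ r, r / (μ + r) ∂P ≤ b / (μ + b) := by
  have h := integral_mono_ae (rr_integrable a b μ ha P hsupp hμ)
    (integrable_const (b / (μ + b))) ?_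
  · simpa using h
  · filter_upwards [hsupp] with r hr
    have hr0 : 0 < r := lt_of_lt_of_le ha hr.1
    rw [div_le_div_iff₀ (by linarith) (by linarith [hr.2])]
    nlinarith [hr.2]

lemma rr_integral_zero (a b : ℝ) (ha : 0 < a) (P : Measure ℝ) [IsProbabilityMeasure P]
    (hsupp : ∀ᵐ r ∂P, r ∈ Set.Icc a b) :
    ∫ r, r / ((0:ℝ) + r) ∂P = 1 := by
  rw [show (1:ℝ) = ∫ _, (1:ℝ) ∂P by simp]
  apply integral_congr_ae
  filter_upwards [hsupp] with r hr
  have hr0 : 0 < r := lt_of_lt_of_le ha hr.1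
  field_simp
  ring

lemma rr_strict (a b μ₁ μ₂ : ℝ) (ha : 0 < a) (P : Measure ℝ) [IsProbabilityMeasure P]
    (hsupp : ∀ᵐ r ∂P, r ∈ Set.Icc a b) (h1 : 0 ≤ μ₁) (h12 : μ₁ < μ₂) :
    ∫ r, r / (μ₂ + r) ∂P < ∫ r, r / (μ₁ + r) ∂P := by
  have hi1 := rr_integrable a b μ₁ ha P hsupp h1
  have hi2 := rr_integrable a b μ₂ ha P hsupp (h1.trans h12.le)
  rw [← sub_pos, ← integral_sub hi1 hi2]
  have hpos : ∀ᵐ r ∂P, 0 < r / (μ₁ + r) - r / (μ₂ + r) := by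
    filter_upwards [hsupp] with r hr
    have hr0 : 0 < r := lt_of_lt_of_le ha hr.1
    have := div_lt_div_of_pos_left hr0 (by linarith : (0:ℝ) < μ₁ + r) (by linarith : μ₁ + r < μ₂ + r)
    linarith
  by_contra hle
  push_neg at hle
  have hnn : 0 ≤ᵐ[P] fun r => r / (μ₁ + r) - r / (μ₂ + r) :=
    hpos.mono fun r h => h.le
  have hint := hi1.sub hi2
  have hz : ∫ r, (r / (μ₁ + r) - r / (μ₂ + r)) ∂P = 0 :=
    le_antisymm hle (integral_nonneg_of_ae hnn)
  have hzero := (integral_eq_zero_iff_of_nonneg_ae hnn hint).mp hz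
  have hne : (P : Measure ℝ) ≠ 0 := IsProbabilityMeasure.ne_zero P
  have hfalse : ∀ᵐ r ∂P, False := by
    filter_upwards [hpos, hzero] with r h1' h2'
    simp only [Pi.zero_apply] at h2'
    rw [h2'] at h1'
    exact lt_irrefl 0 h1'
  rw [ae_iff] at hfalse
  simp at hfalse

lemma rr_continuousOn (a b M : ℝ) (ha : 0 < a) (P : Measure ℝ) [IsProbabilityMeasure P]
    (hsupp : ∀ᵐ r ∂P, r ∈ Set.Icc a b) :
    ContinuousOn (fun μ => ∫ r, r / (μ + r) ∂P) (Set.Icc 0 M) := by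
  intro μ₀ hμ₀
  apply continuousWithinAt_of_dominated (bound := fun _ => (1:ℝ))
  · exact Filter.Eventually.of_forall fun μ =>
      (measurable_id.div (measurable_const.add measurable_id)).aestronglyMeasurable
  · filter_upwards [self_mem_nhdsWithin] with μ hμ
    filter_upwards [hsupp] with r hr
    have hr0 : 0 < r := lt_of_lt_of_le ha hr.1
    have hd : 0 < μ + r := by have := hμ.1; linarith
    rw [Real.norm_eq_abs, abs_of_nonneg (by positivity), div_le_one hd]
    have := hμ.1; linarith
  · exact integrable_const 1
  · filter_upwards [hsupp] with r hr
    have hr0 : 0 < r := lt_of_lt_of_le ha hr.1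
    have hne : μ₀ + r ≠ 0 := by have := hμ₀.1; intro h; linarith
    exact (ContinuousAt.div continuousAt_const (continuousAt_id.add continuousAt_const)
      hne).continuousWithinAt

/-- Self-induced regularization of ridgeless regression: for `φ ∈ (0,1]`,
`μ = 0` is the unique solution in `[0,∞)` of `μ = φ ∫ μ r/(μ+r) dP`; for
`φ > 1` there is a unique strictly positive solution. -/
theorem ridgeless_self_induced_regularization (a b φ : ℝ)
    (ha : 0 < a) (hab : a ≤ b)
    (P : Measure ℝ) [IsProbabilityMeasure P]
    (hsupp : ∀ᵐ r ∂P, r ∈ Set.Icc a b) (hφ : 0 < φ) :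
    (φ ≤ 1 → ∀ μ : ℝ, 0 ≤ μ →
      (μ = φ * ∫ r, μ * r / (μ + r) ∂P ↔ μ = 0)) ∧
    (1 < φ → ∃! μ : ℝ, 0 < μ ∧ μ = φ * ∫ r, μ * r / (μ + r) ∂P) := by
  have hb : 0 < b := lt_of_lt_of_le ha hab
  have key : ∀ μ : ℝ, (∫ r, μ * r / (μ + r) ∂P) = μ * ∫ r, r / (μ + r) ∂P := by
    intro μ
    rw [← integral_const_mul]
    congr 1; funext r; rw [mul_div_assoc]
  have scalar : ∀ μ : ℝ, 0 < μ → μ = φ * ∫ r, μ * r / (μ + r) ∂P →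
      φ * ∫ r, r / (μ + r) ∂P = 1 := by
    intro μ hμ heq
    rw [key] at heq
    have h2 : μ * (φ * ∫ r, r / (μ + r) ∂P) = μ * 1 := by
      linear_combination -heq
    exact mul_left_cancel₀ (ne_of_gt hμ) h2
  constructor
  · intro hφ1 μ hμ
    constructor
    · intro heq
      by_contra hne
      have hμpos : 0 < μ := lt_of_le_of_ne hμ (Ne.symm hne)
      have hsc := scalar μ hμpos heq
      have hle := rr_integral_le' a b μ ha P hsupp hμ
      have hlt : b / (μ + b) < 1 := by
        rw [div_lt_one (by linarith)]; linarith
      nlinarith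
    · intro h; subst h; simp
  · intro hφ1
    set M := φ * b with hM
    have hM0 : 0 ≤ M := by positivity
    have hcont : ContinuousOn (fun μ => φ * ∫ r, r / (μ + r) ∂P) (Set.Icc 0 M) :=
      continuousOn_const.mul (rr_continuousOn a b M ha P hsupp)
    have hg0 : φ * ∫ r, r / ((0:ℝ) + r) ∂P = φ := by
      rw [rr_integral_zero a b ha P hsupp, mul_one]
    have hgM : φ * ∫ r, r / (M + r) ∂P ≤ 1 := by
      have h1 := rr_integral_le a b M ha P hsupp hM0
      have h2 : φ * (b / (M + a)) < 1 := by
        rw [mul_div_assoc', div_lt_one (by positivity), hM]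
        linarith
      nlinarith
    have hmem : (1:ℝ) ∈ Set.Icc (φ * ∫ r, r / (M + r) ∂P) (φ * ∫ r, r / ((0:ℝ) + r) ∂P) := by
      constructor
      · exact hgM
      · rw [hg0]; linarith
    obtain ⟨μ, hμmem, hgμ⟩ := intermediate_value_Icc' hM0 hcont hmem
    have hsμ : φ * ∫ r, r / (μ + r) ∂P = 1 := hgμ
    have hμpos : 0 < μ := by
      rcases lt_or_eq_of_le hμmem.1 with h | h
      · exact h
      · exfalso; rw [← h, hg0] at hsμ; linarith
    refine ⟨μ, ⟨hμpos, ?_⟩, ?_⟩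
    · rw [key, ← mul_assoc, mul_comm φ μ, mul_assoc, hsμ, mul_one]
    · rintro ν ⟨hνpos, hνeq⟩
      have hsν := scalar ν hνpos hνeq
      have hII : ∫ r, r / (ν + r) ∂P = ∫ r, r / (μ + r) ∂P :=
        mul_left_cancel₀ (ne_of_gt hφ) (by rw [hsν, hsμ])
      rcases lt_trichotomy ν μ with h | h | h
      · exact absurd hII (ne_of_gt (rr_strict a b ν μ ha P hsupp hνpos.le h))
      · exact h
      · exact absurd hII (ne_of_lt (rr_strict a b μ ν ha P hsupp hμpos.le h))
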